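/- Let f : ℝ → ℝ be 1-periodic with absolutely convergent Fourier series and mean zero, i.e. f(v) = Σ_{n≠0} f̂[n] e^{2πi n v} with ‖f‖_{A(𝕋)} := Σ_n |f̂[n]| < ∞ and f̂[0] = 0. Let φ : ℝ → ℝ be 1-periodic of bounded variation, with total variation ‖φ‖_{TV} over one period. For k ∈ ℤ define c[k] = ∫₀¹ f(k v + φ(v)) dv. Then for every k ∈ ℤ∖{0}: |c[k]| ≤ (1/|k|) · ‖f‖_{A(𝕋)} · ‖φ‖_{TV}. -/

import Mathlib

open MeasureTheory Real

open Set

open scoped ENNReal NNReal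

noncomputable section


lemma varsum' (g : ℝ → ℂ) (m : ℕ) (hm : 0 < m) :
    ∑ j ∈ Finset.range m, eVariationOn g (Set.Icc ((j:ℝ)/m) (((j:ℝ)+1)/m))
      = eVariationOn g (Set.Icc 0 1) := by
  have hmR : (0:ℝ) < m := Nat.cast_pos.mpr hm
  have key : ∀ i : ℕ, i ≤ m →
      ∑ j ∈ Finset.range i, eVariationOn g (Set.Icc ((j:ℝ)/m) (((j:ℝ)+1)/m))
        = eVariationOn g (Set.Icc 0 ((i:ℝ)/m)) := by
    intro i hi
    induction i with
    | zero => simp [eVariationOn.subsingleton g (by simp : (Set.Icc (0:ℝ) (0/m)).Subsingleton)]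
    | succ i ih =>
      rw [Finset.sum_range_succ, ih (Nat.le_of_succ_le hi)]
      have h1 : (0:ℝ) ≤ (i:ℝ)/m := by positivity
      have h2 : (i:ℝ)/m ≤ ((i:ℝ)+1)/m := by gcongr; linarith
      have := eVariationOn.Icc_add_Icc g (s := Set.univ) h1 h2 (Set.mem_univ _)
      simp only [Set.univ_inter] at this
      rw [this]
      push_cast
      ring_nf
  have hfin := key m le_rfl
  rwa [div_self hmR.ne'] at hfin

lemma incsum' (g : ℝ → ℂ) (hbv : BoundedVariationOn g (Set.Icc 0 1)) (m : ℕ) (hm : 0 < m) :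
    ∑ j ∈ Finset.range m, ‖g (((j:ℝ)+1)/m) - g ((j:ℝ)/m)‖
      ≤ (eVariationOn g (Set.Icc 0 1)).toReal := by
  have hmR : (0:ℝ) < m := Nat.cast_pos.mpr hm
  set u : ℕ → ℝ := fun i => min ((i:ℝ)/m) 1 with hu
  have humono : Monotone u := by
    intro i j hij
    exact min_le_min (by gcongr) le_rfl
  have hus : ∀ i, u i ∈ Set.Icc (0:ℝ) 1 := by
    intro i
    constructor
    · exact le_min (by positivity) zero_le_one
    · exact min_le_right _ _
  have hsum := eVariationOn.sum_le (f := g) (n := m) humono hus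
  have huj : ∀ j : ℕ, j ≤ m → u j = (j:ℝ)/m := by
    intro j hj
    simp only [hu, min_eq_left_iff]
    rw [div_le_one hmR]
    exact_mod_cast hj
  have hconv : ∑ j ∈ Finset.range m, ‖g (((j:ℝ)+1)/m) - g ((j:ℝ)/m)‖
      = (∑ j ∈ Finset.range m, edist (g (u (j+1))) (g (u j))).toReal := by
    rw [ENNReal.toReal_sum (fun a _ => edist_ne_top _ _)]
    apply Finset.sum_congr rfl
    intro j hj
    rw [Finset.mem_range] at hj
    rw [huj j hj.le, huj (j+1) hj]
    rw [edist_dist, ENNReal.toReal_ofReal dist_nonneg, dist_eq_norm]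
    push_cast
    ring_nf
  rw [hconv]
  exact ENNReal.toReal_mono hbv hsum


lemma oscA (g : ℝ → ℂ)
    (hper : Function.Periodic g 1)
    (hbv : BoundedVariationOn g (Set.Icc 0 1))
    (hint : IntervalIntegrable g MeasureTheory.volume 0 1)
    (N : ℤ) (hN : N ≠ 0) :
    ‖∫ v in (0:ℝ)..1, Complex.exp (2*π*Complex.I*N*v) * g v‖
      ≤ (eVariationOn g (Set.Icc 0 1)).toReal / (2*π*|(N:ℝ)|) := by
  have varsum := varsum' g
  have incsum := incsum' g hbv
  set V : ℝ := (eVariationOn g (Set.Icc 0 1)).toReal with hV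
  have hVnn : 0 ≤ V := ENNReal.toReal_nonneg
  set c : ℂ := 2*π*Complex.I*N with hc
  have hNR : |(N:ℝ)| > 0 := by
    simp only [abs_pos, ne_eq, Int.cast_eq_zero]; exact hN
  have hcform : ∀ v : ℝ, c * v = ((2*π*N*v : ℝ) : ℂ) * Complex.I := by
    intro v; simp only [hc]; push_cast; ring
  have hcne : c ≠ 0 := by
    intro h
    rw [hc] at h
    have := congrArg (‖·‖) h
    simp [Complex.norm_natCast, abs_of_pos Real.pi_pos] at this
    exact hN (by exact_mod_cast this)
  have hcnorm : ‖c‖ = 2*π*|(N:ℝ)| := by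
    rw [hc]
    simp [Complex.norm_I, abs_of_pos Real.pi_pos,
      Complex.norm_intCast]
  have hexpnorm : ∀ v : ℝ, ‖Complex.exp (c * v)‖ = 1 := by
    intro v
    rw [hcform v]
    exact Complex.norm_exp_ofReal_mul_I _
  -- key estimate for each m
  have key : ∀ m : ℕ, 0 < m →
      ‖∫ v in (0:ℝ)..1, Complex.exp (c*v) * g v‖ ≤ V/(2*π*|(N:ℝ)|) + V/m := by
    intro m hm
    have hmR : (0:ℝ) < m := Nat.cast_pos.mpr hm
    set t : ℕ → ℝ := fun j => (j:ℝ)/m with ht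
    have htmono : ∀ j : ℕ, t j ≤ t (j+1) := by
      intro j; simp only [ht]; gcongr; push_cast; linarith
    have htmem : ∀ j : ℕ, j ≤ m → t j ∈ Set.Icc (0:ℝ) 1 := by
      intro j hj
      constructor
      · positivity
      · rw [div_le_one hmR]; exact_mod_cast hj
    have hintj : ∀ j : ℕ, j < m →
        IntervalIntegrable (fun v => Complex.exp (c*v) * g v) volume (t j) (t (j+1)) := by
      intro j hj
      have hsub : Set.uIcc (t j) (t (j+1)) ⊆ Set.uIcc (0:ℝ) 1 := by
        rw [Set.uIcc_of_le (htmono j), Set.uIcc_of_le zero_le_one]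
        exact Set.Icc_subset_Icc (htmem j hj.le).1 (htmem (j+1) hj).2
      exact (hint.mono_set hsub).continuousOn_mul
        (Complex.continuous_exp.comp (continuous_const.mul Complex.continuous_ofReal)).continuousOn
    have hsplit : (∫ v in (0:ℝ)..1, Complex.exp (c*v) * g v)
        = ∑ j ∈ Finset.range m, ∫ v in t j..t (j+1), Complex.exp (c*v) * g v := by
      rw [intervalIntegral.sum_integral_adjacent_intervals hintj]
      simp only [ht]
      norm_num
      rw [div_self hmR.ne']
    set S : ℂ := ∑ j ∈ Finset.range m,
        g (t j) * ((Complex.exp (c * t (j+1)) - Complex.exp (c * t j))/c) with hS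
    -- bound I - S
    have hIS : ‖(∫ v in (0:ℝ)..1, Complex.exp (c*v) * g v) - S‖ ≤ V/m := by
      rw [hsplit, hS, ← Finset.sum_sub_distrib]
      calc ‖∑ j ∈ Finset.range m, ((∫ v in t j..t (j+1), Complex.exp (c*v) * g v)
            - g (t j) * ((Complex.exp (c * t (j+1)) - Complex.exp (c * t j))/c))‖
          ≤ ∑ j ∈ Finset.range m,
            ‖(∫ v in t j..t (j+1), Complex.exp (c*v) * g v)
            - g (t j) * ((Complex.exp (c * t (j+1)) - Complex.exp (c * t j))/c)‖ :=
            norm_sum_le _ _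
        _ ≤ ∑ j ∈ Finset.range m,
            (eVariationOn g (Set.Icc (t j) (t (j+1)))).toReal * (1/m) := by
            apply Finset.sum_le_sum
            intro j hj
            rw [Finset.mem_range] at hj
            have hvj_ne : eVariationOn g (Set.Icc (t j) (t (j+1))) ≠ ⊤ := by
              apply hbv.mono
              exact Set.Icc_subset_Icc (htmem j hj.le).1 (htmem (j+1) hj).2
            have hexpint : (∫ v in t j..t (j+1), Complex.exp (c*v))
                = (Complex.exp (c * t (j+1)) - Complex.exp (c * t j))/c :=
              integral_exp_mul_complex hcne
            rw [← hexpint, ← intervalIntegral.integral_const_mul, ← intervalIntegral.integral_sub (hintj j hj)]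
            swap
            · exact ((Complex.continuous_exp.comp
                (continuous_const.mul Complex.continuous_ofReal)).intervalIntegrable _ _).const_mul _
            have hlen : |t (j+1) - t j| = 1/m := by
              simp only [ht]
              rw [abs_of_nonneg (by linarith [htmono j])]
              push_cast; field_simp; ring
            calc ‖∫ v in t j..t (j+1), (Complex.exp (c*v) * g v - g (t j) * Complex.exp (c*v))‖
                ≤ (eVariationOn g (Set.Icc (t j) (t (j+1)))).toReal * |t (j+1) - t j| := by
                  apply intervalIntegral.norm_integral_le_of_norm_le_const
                  intro x hx
                  rw [Set.uIoc_of_le (htmono j)] at hx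
                  have hxmem : x ∈ Set.Icc (t j) (t (j+1)) := ⟨hx.1.le, hx.2⟩
                  have : Complex.exp (c*x) * g x - g (t j) * Complex.exp (c*x)
                      = Complex.exp (c*x) * (g x - g (t j)) := by ring
                  rw [this, norm_mul, hexpnorm x, one_mul]
                  have hed := eVariationOn.edist_le g hxmem
                    (Set.left_mem_Icc.mpr (htmono j))
                  rw [edist_dist] at hed
                  have := ENNReal.toReal_mono hvj_ne hed
                  rwa [ENNReal.toReal_ofReal dist_nonneg, dist_eq_norm] at this
              _ = (eVariationOn g (Set.Icc (t j) (t (j+1)))).toReal * (1/m) := by rw [hlen]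
        _ ≤ V / m := by
            rw [← Finset.sum_mul]
            have hsum_eq : ∑ j ∈ Finset.range m, (eVariationOn g (Set.Icc (t j) (t (j+1)))).toReal = V := by
              rw [hV, ← varsum m hm, ENNReal.toReal_sum]
              · apply Finset.sum_congr rfl
                intro j hj
                rw [Finset.mem_range] at hj
                simp only [ht]
                push_cast
                ring_nf
              · intro j hj
                rw [Finset.mem_range] at hj
                apply hbv.mono
                intro x hx
                exact ⟨le_trans (by positivity) hx.1,
                  le_trans hx.2 (by rw [div_le_one hmR]; push_cast; exact_mod_cast Nat.succ_le_of_lt hj)⟩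
            rw [hsum_eq, mul_one_div]
    -- bound S
    have hSb : ‖S‖ ≤ V/(2*π*|(N:ℝ)|) := by
      have habel : ∑ j ∈ Finset.range m, (g (t j) * (Complex.exp (c * t (j+1)) - Complex.exp (c * t j)))
          = - ∑ j ∈ Finset.range m, Complex.exp (c * t (j+1)) * (g (t (j+1)) - g (t j)) := by
        have htel : ∑ j ∈ Finset.range m,
            (g (t (j+1)) * Complex.exp (c * t (j+1)) - g (t j) * Complex.exp (c * t j))
            = g (t m) * Complex.exp (c * t m) - g (t 0) * Complex.exp (c * t 0) :=
          Finset.sum_range_sub (fun j => g (t j) * Complex.exp (c * t j)) m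
        have ht0 : t 0 = 0 := by simp [ht]
        have htm : t m = 1 := by simp [ht]; exact hm.ne'
        have hcexp1 : Complex.exp (c * t m) = 1 := by
          rw [htm]
          push_cast
          rw [mul_one, hc]
          have : (2:ℂ)*π*Complex.I*N = N * (2*π*Complex.I) := by ring
          rw [this]
          exact Complex.exp_int_mul_two_pi_mul_I N
        have hgper : g (t m) = g (t 0) := by
          rw [htm, ht0]
          have := hper 0
          simpa using this
        have hzero : ∑ j ∈ Finset.range m,
            (g (t (j+1)) * Complex.exp (c * t (j+1)) - g (t j) * Complex.exp (c * t j)) = 0 := by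
          rw [htel, hcexp1, hgper, ht0]
          simp
        have hsplit2 : ∀ j : ℕ, g (t (j+1)) * Complex.exp (c * t (j+1)) - g (t j) * Complex.exp (c * t j)
            = g (t j) * (Complex.exp (c * t (j+1)) - Complex.exp (c * t j))
              + Complex.exp (c * t (j+1)) * (g (t (j+1)) - g (t j)) := by
          intro j; ring
        rw [Finset.sum_congr rfl (fun j _ => hsplit2 j), Finset.sum_add_distrib] at hzero
        linear_combination hzero
      have hSeq : S = (1/c) * ∑ j ∈ Finset.range m,
          (g (t j) * (Complex.exp (c * t (j+1)) - Complex.exp (c * t j))) := by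
        rw [hS, Finset.mul_sum]
        apply Finset.sum_congr rfl
        intro j _
        field_simp
      rw [hSeq, habel]
      rw [norm_mul, norm_neg]
      calc ‖(1:ℂ)/c‖ * ‖∑ j ∈ Finset.range m, Complex.exp (c * t (j+1)) * (g (t (j+1)) - g (t j))‖
          ≤ ‖(1:ℂ)/c‖ * ∑ j ∈ Finset.range m, ‖g (t (j+1)) - g (t j)‖ := by
            apply mul_le_mul_of_nonneg_left _ (norm_nonneg _)
            refine le_trans (norm_sum_le _ _) ?_
            apply Finset.sum_le_sum
            intro j _
            rw [norm_mul, hexpnorm (t (j+1)), one_mul]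
        _ ≤ ‖(1:ℂ)/c‖ * V := by
            apply mul_le_mul_of_nonneg_left _ (norm_nonneg _)
            have := incsum m hm
            refine le_trans (le_of_eq ?_) this
            apply Finset.sum_congr rfl
            intro j hj
            simp only [ht]
            push_cast
            ring_nf
        _ = V/(2*π*|(N:ℝ)|) := by
            rw [norm_div, norm_one, hcnorm]
            field_simp
    have hdecomp : (∫ v in (0:ℝ)..1, Complex.exp (c*v) * g v)
        = S + ((∫ v in (0:ℝ)..1, Complex.exp (c*v) * g v) - S) := by ring
    rw [hdecomp]
    exact le_trans (norm_add_le _ _) (add_le_add hSb hIS)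
  -- take the limit m → ∞
  have htend : Filter.Tendsto (fun m : ℕ => V/(2*π*|(N:ℝ)|) + V/m) Filter.atTop
      (nhds (V/(2*π*|(N:ℝ)|) + 0)) :=
    Filter.Tendsto.add tendsto_const_nhds
      (Filter.Tendsto.div_atTop tendsto_const_nhds tendsto_natCast_atTop_atTop)
  rw [add_zero] at htend
  apply ge_of_tendsto htend
  filter_upwards [Filter.eventually_ge_atTop 1] with m hm
  exact key m hm

lemma lipschitz_exp_aux (b : ℝ) :
    LipschitzWith (Real.nnabs b) (fun x : ℝ => Complex.exp ((b*x : ℝ) * Complex.I)) := by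
  have h0 := lipschitzWith_circleMap (0:ℂ) 1
  have hscale : LipschitzWith (Real.nnabs b) (fun x : ℝ => b * x) := by
    rw [lipschitzWith_iff_dist_le_mul]
    intro x y
    rw [Real.dist_eq, Real.dist_eq, Real.coe_nnabs, ← abs_mul]
    apply le_of_eq; congr 1; ring
  have hcomp := h0.comp hscale
  have h1 : Real.nnabs (1:ℝ) = 1 := by
    apply NNReal.coe_injective; simp
  rw [h1, one_mul] at hcomp
  have hfun : (circleMap 0 1 ∘ fun x : ℝ => b*x)
      = fun x : ℝ => Complex.exp ((b*x : ℝ) * Complex.I) := by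
    funext x; simp [circleMap, Function.comp]
  rwa [hfun] at hcomp

/-- Lemma on oscillatory averages, BV case: if `f` is 1-periodic with
absolutely convergent Fourier series `f(v) = ∑_{n≠0} a_n e^{2πinv}` (mean zero) and `φ`
is 1-periodic of bounded variation, then
`|∫₀¹ f(kv + φ(v)) dv| ≤ (1/|k|) ‖f‖_{A(𝕋)} ‖φ‖_{TV}` for every `k ≠ 0`. -/
theorem oscillatory_average_BV_bound (f φ : ℝ → ℝ) (a : ℤ → ℂ)
    (hf_per : Function.Periodic f 1)
    (ha_sum : Summable fun n : ℤ => ‖a n‖)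
    (ha₀ : a 0 = 0)
    (hf_rep : ∀ v : ℝ, (f v : ℂ) =
      ∑' n : ℤ, a n * Complex.exp (2 * π * Complex.I * n * v))
    (hφ_per : Function.Periodic φ 1)
    (hφ_bv : BoundedVariationOn φ (Set.Icc 0 1))
    (k : ℤ) (hk : k ≠ 0) :
    |∫ v in (0:ℝ)..1, f ((k : ℝ) * v + φ v)|
      ≤ (1 / |(k : ℝ)|) * (∑' n : ℤ, ‖a n‖) *
          (eVariationOn φ (Set.Icc 0 1)).toReal := by
  set V : ℝ := (eVariationOn φ (Set.Icc 0 1)).toReal with hV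
  have hVnn : 0 ≤ V := ENNReal.toReal_nonneg
  have hkR : (0:ℝ) < |(k:ℝ)| := by
    simp only [abs_pos, ne_eq, Int.cast_eq_zero]; exact hk
  -- measurability of φ on (0,1]
  obtain ⟨p, q, hp, hq, hpq⟩ :=
    hφ_bv.locallyBoundedVariationOn.exists_monotoneOn_sub_monotoneOn
  have hφm : AEMeasurable φ (volume.restrict (Set.Ioc (0:ℝ) 1)) := by
    have hpm := aemeasurable_restrict_of_monotoneOn (μ := volume) (measurableSet_Icc (a := (0:ℝ)) (b := 1)) hp
    have hqm := aemeasurable_restrict_of_monotoneOn (μ := volume) (measurableSet_Icc (a := (0:ℝ)) (b := 1)) hq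
    have hmeas : AEMeasurable φ (volume.restrict (Set.Icc (0:ℝ) 1)) := by
      rw [hpq]; exact hpm.sub hqm
    exact hmeas.mono_measure (Measure.restrict_mono Set.Ioc_subset_Icc_self le_rfl)
  -- the summands
  set h : ℤ → ℝ → ℂ := fun n v => a n * Complex.exp (2*π*Complex.I*n*(((k:ℝ)*v + φ v : ℝ) : ℂ))
    with hh
  have hexpnorm : ∀ (b : ℝ) (n : ℤ), ‖Complex.exp (2*π*Complex.I*n*(b:ℂ))‖ = 1 := by
    intro b n
    have : (2*π*Complex.I*n*(b:ℂ)) = ((2*π*n*b : ℝ) : ℂ) * Complex.I := by push_cast; ring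
    rw [this]
    exact Complex.norm_exp_ofReal_mul_I _
  have hmeasn : ∀ n : ℤ, AEStronglyMeasurable (h n) (volume.restrict (Set.Ioc (0:ℝ) 1)) := by
    intro n
    apply AEStronglyMeasurable.const_mul
    apply AEMeasurable.aestronglyMeasurable
    apply Complex.measurable_exp.comp_aemeasurable
    apply AEMeasurable.const_mul
    exact Complex.measurable_ofReal.comp_aemeasurable
      ((aemeasurable_const.mul aemeasurable_id).add hφm)
  have hnorm_h : ∀ n v, ‖h n v‖ = ‖a n‖ := by
    intro n v
    rw [hh]
    simp only [norm_mul]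
    rw [hexpnorm _ n, mul_one]
  -- interchange sum and integral
  have hlint : ∀ n : ℤ, (∫⁻ v in Set.Ioc (0:ℝ) 1, (‖h n v‖₊ : ℝ≥0∞)) = (‖a n‖₊ : ℝ≥0∞) := by
    intro n
    have hpt : ∀ v : ℝ, (‖h n v‖₊ : ℝ≥0∞) = (‖a n‖₊ : ℝ≥0∞) := by
      intro v
      rw [← enorm_eq_nnnorm, ← enorm_eq_nnnorm, ← ofReal_norm, ← ofReal_norm, hnorm_h n v]
    simp only [hpt]
    rw [MeasureTheory.setLIntegral_const]
    simp [Real.volume_Ioc]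
  have hsum_nn : Summable (fun n : ℤ => ‖a n‖₊) :=
    NNReal.summable_coe.mp (by simpa [coe_nnnorm] using ha_sum)
  have hlsum : (∑' n : ℤ, ∫⁻ v in Set.Ioc (0:ℝ) 1, (‖h n v‖₊ : ℝ≥0∞)) ≠ ⊤ := by
    rw [tsum_congr hlint]
    exact ENNReal.tsum_coe_ne_top_iff_summable.mpr hsum_nn
  have hrw : (∫ v in Set.Ioc (0:ℝ) 1, ((f ((k:ℝ)*v + φ v) : ℝ) : ℂ))
      = ∑' n : ℤ, ∫ v in Set.Ioc (0:ℝ) 1, h n v := by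
    rw [← integral_tsum hmeasn hlsum]
    apply integral_congr_ae
    apply Filter.Eventually.of_forall
    intro v
    exact hf_rep ((k:ℝ)*v + φ v)
  -- per-mode bound
  have hJbound : ∀ n : ℤ, ‖∫ v in Set.Ioc (0:ℝ) 1, h n v‖ ≤ ‖a n‖ * (V / |(k:ℝ)|) := by
    intro n
    rcases eq_or_ne n 0 with rfl | hn
    · simp [hh, ha₀]
    · have hnR : (0:ℝ) < |(n:ℝ)| := by
        simp only [abs_pos, ne_eq, Int.cast_eq_zero]; exact hn
      set gn : ℝ → ℂ := fun v => Complex.exp (2*π*Complex.I*n*((φ v : ℝ) : ℂ)) with hgn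
      -- properties of gn
      have hgper : Function.Periodic gn 1 := by
        intro v; simp only [hgn, hφ_per v]
      have hgnorm : ∀ v, ‖gn v‖ = 1 := fun v => hexpnorm (φ v) n
      have hliplem := lipschitz_exp_aux (2*π*n)
      have hfun_eq : (fun x : ℝ => Complex.exp ((2*π*(n:ℝ)*x : ℝ) * Complex.I))
          = fun x : ℝ => Complex.exp (2*π*Complex.I*n*((x:ℝ):ℂ)) := by
        funext x; congr 1; push_cast; ring
      rw [hfun_eq] at hliplem
      have hvar_le : eVariationOn gn (Set.Icc 0 1)
          ≤ (Real.nnabs (2*π*n) : ℝ≥0∞) * eVariationOn φ (Set.Icc 0 1) := by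
        have := (hliplem.lipschitzOnWith (s := Set.univ)).comp_eVariationOn_le
          (Set.mapsTo_univ φ (Set.Icc 0 1))
        simpa [Function.comp_def, hgn] using this
      have hbvg : BoundedVariationOn gn (Set.Icc 0 1) :=
        ne_top_of_le_ne_top (ENNReal.mul_ne_top ENNReal.coe_ne_top hφ_bv) hvar_le
      have hvar_real : (eVariationOn gn (Set.Icc 0 1)).toReal ≤ 2*π*|(n:ℝ)| * V := by
        have h2 := ENNReal.toReal_mono
          (ENNReal.mul_ne_top ENNReal.coe_ne_top hφ_bv) hvar_le
        rw [ENNReal.toReal_mul, ENNReal.coe_toReal, Real.coe_nnabs] at h2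
        calc (eVariationOn gn (Set.Icc 0 1)).toReal ≤ |2*π*(n:ℝ)| * V := h2
          _ = 2*π*|(n:ℝ)| * V := by
              rw [abs_mul, abs_mul, abs_of_pos Real.pi_pos]
              norm_num
      have hgmeas : AEStronglyMeasurable gn (volume.restrict (Set.Ioc (0:ℝ) 1)) := by
        apply AEMeasurable.aestronglyMeasurable
        apply Complex.measurable_exp.comp_aemeasurable
        apply AEMeasurable.const_mul
        exact Complex.measurable_ofReal.comp_aemeasurable hφm
      have hgint : IntervalIntegrable gn volume 0 1 := by
        rw [intervalIntegrable_iff_integrableOn_Ioc_of_le zero_le_one]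
        apply Integrable.mono' (integrable_const (1:ℝ)) hgmeas
        apply Filter.Eventually.of_forall
        intro v
        rw [hgnorm v]
      -- rewrite the integral
      have hNk : n * k ≠ 0 := mul_ne_zero hn hk
      have hJ : (∫ v in Set.Ioc (0:ℝ) 1, h n v)
          = a n * ∫ v in (0:ℝ)..1, Complex.exp (2*π*Complex.I*((n*k : ℤ) : ℂ)*(v:ℂ)) * gn v := by
        rw [← intervalIntegral.integral_of_le zero_le_one, ← intervalIntegral.integral_const_mul]
        apply intervalIntegral.integral_congr
        intro v _
        simp only [hh, hgn]
        rw [← Complex.exp_add]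
        congr 1
        push_cast
        ring
      rw [hJ, norm_mul]
      have hosc := oscA gn hgper hbvg hgint (n*k) hNk
      have hfinal : (eVariationOn gn (Set.Icc 0 1)).toReal / (2*π*|((n*k : ℤ) : ℝ)|)
          ≤ V / |(k:ℝ)| := by
        have habs : ((2:ℝ)*π*|((n*k : ℤ) : ℝ)|) = (2*π*|(n:ℝ)|) * |(k:ℝ)| := by
          push_cast
          rw [abs_mul]
          ring
        rw [habs]
        calc (eVariationOn gn (Set.Icc 0 1)).toReal / ((2*π*|(n:ℝ)|) * |(k:ℝ)|)
            ≤ (2*π*|(n:ℝ)| * V) / ((2*π*|(n:ℝ)|) * |(k:ℝ)|) := by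
              gcongr
          _ = V / |(k:ℝ)| := by
              rw [mul_div_mul_left _ _ (by positivity : (2*π*|(n:ℝ)|) ≠ 0)]
      exact mul_le_mul_of_nonneg_left (le_trans hosc hfinal) (norm_nonneg _)
  -- assemble
  rw [intervalIntegral.integral_of_le zero_le_one]
  have habs_eq : |∫ v in Set.Ioc (0:ℝ) 1, f ((k:ℝ)*v + φ v)|
      = ‖∫ v in Set.Ioc (0:ℝ) 1, ((f ((k:ℝ)*v + φ v) : ℝ) : ℂ)‖ := by
    rw [show (∫ v in Set.Ioc (0:ℝ) 1, ((f ((k:ℝ)*v + φ v) : ℝ) : ℂ))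
        = (((∫ v in Set.Ioc (0:ℝ) 1, f ((k:ℝ)*v + φ v)) : ℝ) : ℂ) from integral_ofReal]
    rw [Complex.norm_real, Real.norm_eq_abs]
  rw [habs_eq, hrw]
  have hbound := tsum_of_norm_bounded ((ha_sum.hasSum.mul_right (V / |(k:ℝ)|))) hJbound
  calc ‖∑' n : ℤ, ∫ v in Set.Ioc (0:ℝ) 1, h n v‖
      ≤ (∑' n : ℤ, ‖a n‖) * (V / |(k:ℝ)|) := hbound
    _ = (1 / |(k:ℝ)|) * (∑' n : ℤ, ‖a n‖) * V := by ring
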